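/- Quadratic surrogate with remainder bound: let A be symmetric K×K with zero diagonal and ‖A‖₂ ≤ α < 1. Define Δ = log det(I + A) + ½‖A‖_F². Then |Δ| ≤ (α/(3(1-α)))·‖A‖_F². -/

import Mathlib

open Matrix Finset Filter

private lemma log_quad_bound' {x a : ℝ} (hx : |x| ≤ a) (ha : a < 1) :
    |Real.log (1 + x) - x + x ^ 2 / 2| ≤ a / (3 * (1 - a)) * x ^ 2 := by
  have hx1 : |x| < 1 := lt_of_le_of_lt hx ha
  have ha0 : 0 ≤ a := le_trans (abs_nonneg x) hx
  have h1x : (0:ℝ) < 1 - |x| := by linarith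
  have h1a : (0:ℝ) < 1 - a := by linarith
  set L := |Real.log (1 + x) - x + x ^ 2 / 2| with hL
  have key : ∀ m : ℕ, L ≤ a / (3 * (1 - a)) * x ^ 2 + |x| ^ (m + 3) / (1 - |x|) := by
    intro m
    have hmain := Real.abs_log_sub_add_sum_range_le (x := -x) (by rwa [abs_neg]) (m + 2)
    rw [abs_neg, sub_neg_eq_add] at hmain
    have hsplit : (∑ i ∈ range (m + 2), (-x) ^ (i + 1) / (i + 1))
        = (-x + x ^ 2 / 2) + ∑ i ∈ Ico 2 (m + 2), (-x) ^ (i + 1) / (i + 1) := by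
      rw [range_eq_Ico, ← Finset.sum_Ico_consecutive _ (by norm_num : (0:ℕ) ≤ 2) (by omega)]
      congr 1
      rw [← range_eq_Ico]
      simp [Finset.sum_range_succ]
      ring
    rw [hsplit] at hmain
    have hT : |∑ i ∈ Ico 2 (m + 2), (-x) ^ (i + 1) / (i + 1)| ≤ |x| ^ 3 / (3 * (1 - |x|)) := by
      calc |∑ i ∈ Ico 2 (m + 2), (-x) ^ (i + 1) / (i + 1)|
          ≤ ∑ i ∈ Ico 2 (m + 2), |(-x) ^ (i + 1) / (i + 1)| := Finset.abs_sum_le_sum_abs _ _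
        _ ≤ ∑ i ∈ Ico 2 (m + 2), |x| ^ (i + 1) / 3 := by
            apply Finset.sum_le_sum
            intro i hi
            rw [abs_div, abs_pow, abs_neg]
            apply div_le_div_of_nonneg_left (by positivity) (by norm_num)
            · have h2i : 2 ≤ i := (Finset.mem_Ico.mp hi).1
              have h2i' : (2:ℝ) ≤ (i:ℝ) := by exact_mod_cast h2i
              rw [abs_of_nonneg (by positivity : (0:ℝ) ≤ (i:ℝ) + 1)]
              linarith
        _ = (∑ k ∈ range m, |x| ^ (k + 3)) / 3 := by
            rw [Finset.sum_Ico_eq_sum_range, ← Finset.sum_div]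
            norm_num
            congr 1
            funext k
            congr 1
            omega
        _ ≤ |x| ^ 3 * (1 - |x|)⁻¹ / 3 := by
            apply div_le_div_of_nonneg_right _ (by norm_num)
            have heq : ∀ k ∈ range m, |x| ^ (k + 3) = |x| ^ 3 * |x| ^ k := by
              intro k _; ring
            rw [Finset.sum_congr rfl heq, ← Finset.mul_sum]
            apply mul_le_mul_of_nonneg_left _ (by positivity)
            calc ∑ k ∈ range m, |x| ^ k ≤ ∑' k : ℕ, |x| ^ k :=
                  Summable.sum_le_tsum _ (fun k _ => by positivity)
                    (summable_geometric_of_lt_one (abs_nonneg x) hx1)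
              _ = (1 - |x|)⁻¹ := tsum_geometric_of_lt_one (abs_nonneg x) hx1
        _ = |x| ^ 3 / (3 * (1 - |x|)) := by
            field_simp
    have hxab : |x| ^ 3 / (3 * (1 - |x|)) ≤ a / (3 * (1 - a)) * x ^ 2 := by
      have e1 : |x| ^ 3 ≤ a * x ^ 2 := by
        have : |x| ^ 3 = |x| * x ^ 2 := by rw [pow_succ', sq_abs]
        rw [this]
        exact mul_le_mul_of_nonneg_right hx (sq_nonneg x)
      rw [div_mul_eq_mul_div]
      exact div_le_div₀ (by positivity) e1 (by positivity) (by linarith)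
    calc L = |(Real.log (1 + x) - x + x ^ 2 / 2)| := rfl
      _ = |((-x + x ^ 2 / 2 + ∑ i ∈ Ico 2 (m + 2), (-x) ^ (i + 1) / (i + 1))
            + Real.log (1 + x)) - ∑ i ∈ Ico 2 (m + 2), (-x) ^ (i + 1) / (i + 1)| := by
          congr 1; ring
      _ ≤ |(-x + x ^ 2 / 2 + ∑ i ∈ Ico 2 (m + 2), (-x) ^ (i + 1) / (i + 1))
            + Real.log (1 + x)| + |∑ i ∈ Ico 2 (m + 2), (-x) ^ (i + 1) / (i + 1)| :=
          abs_sub _ _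
      _ ≤ |x| ^ (m + 2 + 1) / (1 - |x|) + |x| ^ 3 / (3 * (1 - |x|)) :=
          add_le_add hmain hT
      _ ≤ a / (3 * (1 - a)) * x ^ 2 + |x| ^ (m + 3) / (1 - |x|) := by
          rw [add_comm]; exact add_le_add hxab (le_refl _)
  have hpow : Tendsto (fun m : ℕ => |x| ^ (m + 3)) atTop (nhds 0) := by
    simpa [Function.comp_def] using (tendsto_pow_atTop_nhds_zero_of_lt_one (abs_nonneg x) hx1).comp
      (tendsto_add_atTop_nat 3)
  have htend : Tendsto (fun m : ℕ => a / (3 * (1 - a)) * x ^ 2 + |x| ^ (m + 3) / (1 - |x|))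
      atTop (nhds (a / (3 * (1 - a)) * x ^ 2)) := by
    simpa using (hpow.div_const (1 - |x|)).const_add (a / (3 * (1 - a)) * x ^ 2)
  exact ge_of_tendsto htend (Eventually.of_forall key)

theorem quadratic_surrogate_remainder {K : ℕ} (A : Matrix (Fin K) (Fin K) ℝ)
    (hA : A.IsHermitian) (hdiag : ∀ i, A i i = 0) (α : ℝ)
    (hbnd : ∀ i, |hA.eigenvalues i| ≤ α) (hα : α < 1) :
    |Real.log (1 + A).det + (1 / 2) * ∑ i, ∑ j, (A i j) ^ 2|
      ≤ (α / (3 * (1 - α))) * ∑ i, ∑ j, (A i j) ^ 2 := by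
  set U : Matrix (Fin K) (Fin K) ℝ := (hA.eigenvectorUnitary : Matrix (Fin K) (Fin K) ℝ) with hU
  have hUU : U * star U = 1 := (Matrix.mem_unitaryGroup_iff).mp hA.eigenvectorUnitary.2
  have hUU' : star U * U = 1 := (Matrix.mem_unitaryGroup_iff').mp hA.eigenvectorUnitary.2
  set lam := hA.eigenvalues with hlam
  set D : Matrix (Fin K) (Fin K) ℝ := diagonal (RCLike.ofReal ∘ lam) with hD
  -- determinant identity
  have hdet : (1 + A).det = ∏ i, (1 + lam i) := by
    have h1 : (1 : Matrix (Fin K) (Fin K) ℝ) + A = U * (1 + D) * star U := by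
      rw [mul_add, add_mul, mul_one, hUU]
      congr 1
      exact hA.spectral_theorem
    rw [h1, det_mul_right_comm, hUU, one_mul]
    have h2 : (1 : Matrix (Fin K) (Fin K) ℝ) + D = diagonal (fun i => 1 + lam i) := by
      rw [hD, ← diagonal_one, diagonal_add]
      rfl
    rw [h2, det_diagonal]
  -- Frobenius identity
  have hfro : ∑ i, ∑ j, (A i j) ^ 2 = ∑ i, (lam i) ^ 2 := by
    have h1 : ∑ i, ∑ j, (A i j) ^ 2 = (A * A).trace := by
      rw [Matrix.trace]
      apply Finset.sum_congr rfl
      intro i _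
      rw [Matrix.diag_apply, Matrix.mul_apply]
      apply Finset.sum_congr rfl
      intro j _
      have hsymm : A j i = A i j := by
        have := congrFun (congrFun hA.symm j) i
        simpa [Matrix.conjTranspose_apply] using this
      rw [hsymm]; ring
    have h2 : A * A = U * (D * D) * star U := by
      conv_lhs => rw [hA.spectral_theorem, Unitary.conjStarAlgAut_apply]
      rw [← hD, ← hU]
      calc U * D * star U * (U * D * star U) = U * D * (star U * U) * D * star U := by
            noncomm_ring
        _ = U * (D * D) * star U := by rw [hUU']; noncomm_ring
    rw [h1, h2, Matrix.trace_mul_cycle, hUU', one_mul, hD, diagonal_mul_diagonal,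
      Matrix.trace_diagonal]
    apply Finset.sum_congr rfl
    intro i _
    simp [pow_two]
  -- trace identity
  have htr : ∑ i, lam i = 0 := by
    have h1 : A.trace = 0 := by
      rw [Matrix.trace]
      simp [Matrix.diag, hdiag]
    have h2 : A.trace = ∑ i, lam i := by
      conv_lhs => rw [hA.spectral_theorem, Unitary.conjStarAlgAut_apply]
      rw [Matrix.trace_mul_cycle, hUU', one_mul, Matrix.trace_diagonal]
      simp [hlam]
    rw [← h2, h1]
  rw [hdet, hfro]
  have hpos : ∀ i, (0:ℝ) < 1 + lam i := by
    intro i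
    have := abs_le.mp (hbnd i)
    linarith [this.1]
  rw [Real.log_prod (fun i _ => (hpos i).ne')]
  have hexp : ∑ i, Real.log (1 + lam i) + (1 / 2) * ∑ i, (lam i) ^ 2
      = ∑ i, (Real.log (1 + lam i) - lam i + (lam i) ^ 2 / 2) := by
    rw [Finset.sum_add_distrib, Finset.sum_sub_distrib, htr, sub_zero, ← Finset.sum_div]
    ring
  rw [hexp]
  calc |∑ i, (Real.log (1 + lam i) - lam i + (lam i) ^ 2 / 2)|
      ≤ ∑ i, |Real.log (1 + lam i) - lam i + (lam i) ^ 2 / 2| :=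
        Finset.abs_sum_le_sum_abs _ _
    _ ≤ ∑ i, α / (3 * (1 - α)) * (lam i) ^ 2 :=
        Finset.sum_le_sum (fun i _ => log_quad_bound' (hbnd i) hα)
    _ = (α / (3 * (1 - α))) * ∑ i, (lam i) ^ 2 := by rw [Finset.mul_sum]
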